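/- Let q, m, n be natural numbers, M₁ a real m × q matrix, B₁ : Fin m → ℝ, M₂ a real n × m matrix, B₂ : Fin n → ℝ, and I ⊆ (Fin q → ℝ). Let S⁺ and S⁻ be disjoint finite sets of indices in Fin m such that for every v ∈ I: (M₁.mulVec v + B₁) i ≥ 0 for all i ∈ S⁺ (stably activated neurons) and (M₁.mulVec v + B₁) i ≤ 0 for all i ∈ S⁻ (stably deactivated neurons). Let U = {i : Fin m // i ∉ S⁺ ∧ i ∉ S⁻} and A = {i : Fin m // i ∈ S⁺}, with the corresponding row-submatrices M₁ᴬ = M₁.submatrix Subtype.val id, M₁ᵁ = M₁.submatrix Subtype.val id, bias restrictions B₁ᴬ, B₁ᵁ, and column-submatrices M₂ᴬ = M₂.submatrix id Subtype.val, M₂ᵁ = M₂.submatrix id Subtype.val. Then for every v ∈ I: M₂.mulVec (relu (M₁.mulVec v + B₁)) + B₂ = (M₂ᴬ * M₁ᴬ).mulVec v + M₂ᴬ.mulVec B₁ᴬ + M₂ᵁ.mulVec (relu (M₁ᵁ.mulVec v + B₁ᵁ)) + B₂. That is, deleting the stably deactivated neurons and replacing the stably activated neurons by a direct affine connection preserves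 the block's output on all of I. -/

import Mathlib

noncomputable def relu {ι : Type*} (x : ι → ℝ) : ι → ℝ := fun i => max (x i) 0

theorem stable_neuron_reduction
    (q m n : ℕ)
    (M₁ : Matrix (Fin m) (Fin q) ℝ) (B₁ : Fin m → ℝ)
    (M₂ : Matrix (Fin n) (Fin m) ℝ) (B₂ : Fin n → ℝ)
    (I : Set (Fin q → ℝ))
    (Sp Sm : Finset (Fin m)) (hdisj : Disjoint Sp Sm)
    (hp : ∀ v ∈ I, ∀ i ∈ Sp, (M₁.mulVec v + B₁) i ≥ 0)
    (hm : ∀ v ∈ I, ∀ i ∈ Sm, (M₁.mulVec v + B₁) i ≤ 0) :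
    ∀ v ∈ I,
      M₂.mulVec (relu (M₁.mulVec v + B₁)) + B₂ =
        ((M₂.submatrix id (Subtype.val : {i : Fin m // i ∈ Sp} → Fin m)) *
          (M₁.submatrix (Subtype.val : {i : Fin m // i ∈ Sp} → Fin m) id)).mulVec v +
        (M₂.submatrix id (Subtype.val : {i : Fin m // i ∈ Sp} → Fin m)).mulVec
          (fun i : {i : Fin m // i ∈ Sp} => B₁ i.val) +
        (M₂.submatrix id (Subtype.val : {i : Fin m // i ∉ Sp ∧ i ∉ Sm} → Fin m)).mulVec
          (relu ((M₁.submatrix (Subtype.val : {i : Fin m // i ∉ Sp ∧ i ∉ Sm} → Fin m) id).mulVec v +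
            (fun i : {i : Fin m // i ∉ Sp ∧ i ∉ Sm} => B₁ i.val))) +
        B₂ := by
  intro v hv
  funext j
  set w := M₁.mulVec v + B₁ with hw
  have hrelu : ∀ i, relu w i = max (w i) 0 := fun i => rfl
  set T : Finset (Fin m) := Finset.univ \ (Sp ∪ Sm) with hT
  have key : ∑ i, M₂ j i * relu w i
      = ∑ i ∈ Sp, M₂ j i * w i + ∑ i ∈ T, M₂ j i * relu w i := by
    have hsub : Sp ∪ Sm ⊆ Finset.univ := Finset.subset_univ _
    rw [← Finset.sum_sdiff hsub, ← hT, Finset.sum_union hdisj]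
    have h1 : ∑ i ∈ Sp, M₂ j i * relu w i = ∑ i ∈ Sp, M₂ j i * w i := by
      refine Finset.sum_congr rfl fun i hi => ?_
      rw [hrelu, max_eq_left (hp v hv i hi)]
    have h2 : ∑ i ∈ Sm, M₂ j i * relu w i = 0 := by
      refine Finset.sum_eq_zero fun i hi => ?_
      rw [hrelu, max_eq_right (hm v hv i hi), mul_zero]
    rw [h1, h2]
    ring
  simp only [Pi.add_apply, Matrix.mulVec, Matrix.mul_apply, dotProduct,
    Matrix.submatrix_apply, id_eq]
  rw [key]
  have hA : ∑ i ∈ Sp, M₂ j i * w i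
      = (∑ a : {i : Fin m // i ∈ Sp}, (∑ k, M₂ j a.val * M₁ a.val k * v k))
        + ∑ a : {i : Fin m // i ∈ Sp}, M₂ j a.val * B₁ a.val := by
    rw [← Finset.sum_add_distrib, ← Finset.sum_coe_sort Sp (fun i => M₂ j i * w i)]
    refine Finset.sum_congr rfl fun a _ => ?_
    simp only [hw, Pi.add_apply, Matrix.mulVec, dotProduct, mul_add,
      Finset.mul_sum, mul_assoc]
  have hU : ∑ i ∈ T, M₂ j i * relu w i
      = ∑ a : {i : Fin m // i ∉ Sp ∧ i ∉ Sm},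
          M₂ j a.val * max ((∑ k, M₁ a.val k * v k) + B₁ a.val) 0 := by
    rw [Finset.sum_subtype (s := T) (p := fun i => i ∉ Sp ∧ i ∉ Sm) (by intro x; simp [hT, and_comm]) (f := fun i => M₂ j i * relu w i)]
    refine Finset.sum_congr rfl fun a _ => ?_
    simp [hrelu, hw, relu, Matrix.mulVec, dotProduct]
  rw [hA, hU]
  simp [relu, Matrix.mulVec, dotProduct]
  rw [Finset.sum_comm]
  simp [Finset.sum_mul, mul_assoc]
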